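/- Let V be a finite-dimensional complex vector space, g a non-degenerate bilinear form on V (with invertible Gram matrix), g⁽²⁾ the induced non-degenerate bilinear form on V ⊗ V, and P : V ⊗ V → V ⊗ V a g⁽²⁾-self-adjoint idempotent with range S. Define Φ : Hom(V, S) → Hom(S, V) by Φ(L) = (id ⊗ g)∘(L ⊗ id)∘P restricted to S (where (id⊗g)(v⊗w⊗u) = g(w⊗u)·v), assuming additionally σL = L on S for relevant L so that Φ(L) = (id⊗g)(L⊗id)P. Then Φ is a linear isomorphism if and only if the map P₂₃ = id_V ⊗ P restricts to a linear isomorphism from S ⊗ V onto V ⊗ S inside V ⊗ V ⊗ V. -/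

import Mathlib

open scoped TensorProduct

/-- The contraction `(id ⊗ g) : (V ⊗ V) ⊗ V → V`, `(v ⊗ w) ⊗ u ↦ g(w ⊗ u) • v`. -/
noncomputable def contract {V : Type} [AddCommGroup V] [Module ℂ V]
    (g : V ⊗[ℂ] V →ₗ[ℂ] ℂ) : (V ⊗[ℂ] V) ⊗[ℂ] V →ₗ[ℂ] V :=
  (TensorProduct.rid ℂ V).toLinearMap ∘ₗ (TensorProduct.map LinearMap.id g) ∘ₗ
    (TensorProduct.assoc ℂ V V V).toLinearMap

/-- `Φ(L) = (id ⊗ g) ∘ (L ⊗ id) ∘ P : V ⊗ V → V`. -/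
noncomputable def Phi {V : Type} [AddCommGroup V] [Module ℂ V]
    (g : V ⊗[ℂ] V →ₗ[ℂ] ℂ) (P : Module.End ℂ (V ⊗[ℂ] V))
    (L : V →ₗ[ℂ] V ⊗[ℂ] V) : V ⊗[ℂ] V →ₗ[ℂ] V :=
  contract g ∘ₗ (TensorProduct.map L LinearMap.id) ∘ₗ P

/-- `id ⊗ P` on `(V ⊗ V) ⊗ V`, acting on the last two tensor factors. -/
noncomputable def op23 {V : Type} [AddCommGroup V] [Module ℂ V]
    (P : Module.End ℂ (V ⊗[ℂ] V)) : Module.End ℂ ((V ⊗[ℂ] V) ⊗[ℂ] V) :=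
  (TensorProduct.assoc ℂ V V V).symm.toLinearMap ∘ₗ
    (TensorProduct.map LinearMap.id P) ∘ₗ (TensorProduct.assoc ℂ V V V).toLinearMap

/-- The subspace `S ⊗ V` of `(V ⊗ V) ⊗ V`, for `S ⊆ V ⊗ V`. -/
noncomputable def subSV {V : Type} [AddCommGroup V] [Module ℂ V]
    (S : Submodule ℂ (V ⊗[ℂ] V)) : Submodule ℂ ((V ⊗[ℂ] V) ⊗[ℂ] V) :=
  LinearMap.range (TensorProduct.map S.subtype (LinearMap.id (R := ℂ) (M := V)))

/-- The subspace `V ⊗ S` of `(V ⊗ V) ⊗ V`, for `S ⊆ V ⊗ V`. -/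
noncomputable def subVS {V : Type} [AddCommGroup V] [Module ℂ V]
    (S : Submodule ℂ (V ⊗[ℂ] V)) : Submodule ℂ ((V ⊗[ℂ] V) ⊗[ℂ] V) :=
  LinearMap.range ((TensorProduct.assoc ℂ V V V).symm.toLinearMap ∘ₗ
    TensorProduct.map (LinearMap.id (R := ℂ) (M := V)) S.subtype)

/-- Transfer of `Set.BijOn` along injective parametrizations of the source and target sets. -/
theorem bijOn_range_iff_bijective {α β γ : Type*} {F : γ → γ} {f₁ : α → γ} {f₂ : β → γ}
    {q : α → β} (h₁ : Function.Injective f₁) (h₂ : Function.Injective f₂)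
    (hc : ∀ x, F (f₁ x) = f₂ (q x)) :
    Set.BijOn F (Set.range f₁) (Set.range f₂) ↔ Function.Bijective q := by
  constructor
  · rintro ⟨hmap, hinj, hsurj⟩
    constructor
    · intro x y hxy
      apply h₁
      apply hinj ⟨x, rfl⟩ ⟨y, rfl⟩
      rw [hc, hc, hxy]
    · intro y2
      obtain ⟨c, hc1, hc2⟩ := hsurj ⟨y2, rfl⟩
      obtain ⟨x, rfl⟩ := hc1
      exact ⟨x, h₂ (by rw [← hc x, hc2])⟩
  · rintro ⟨qinj, qsurj⟩
    refine ⟨?_, ?_, ?_⟩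
    · rintro _ ⟨x, rfl⟩
      rw [hc]
      exact Set.mem_range_self _
    · rintro _ ⟨x, rfl⟩ _ ⟨y, rfl⟩ hFxy
      rw [hc, hc] at hFxy
      rw [qinj (h₂ hFxy)]
    · rintro _ ⟨y, rfl⟩
      obtain ⟨x, rfl⟩ := qsurj y
      exact ⟨f₁ x, Set.mem_range_self _, hc x⟩

/-- For a non-degenerate `g`, a `g⁽²⁾`-self-adjoint idempotent `P` with range `S`, the map
`Φ : Hom(V, S) → Hom(S, V)`, `Φ(L) = (id ⊗ g)(L ⊗ id)P|_S`, is a linear isomorphism if and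
only if `P₂₃ = id ⊗ P` restricts to a linear isomorphism from `S ⊗ V` onto `V ⊗ S`. -/
theorem stmt13 {n : ℕ} {V : Type} [AddCommGroup V] [Module ℂ V]
    (b : Module.Basis (Fin n) ℂ V)
    (g : V ⊗[ℂ] V →ₗ[ℂ] ℂ)
    (hG : IsUnit (Matrix.of fun i j => g (b i ⊗ₜ[ℂ] b j)))
    (g2 : (V ⊗[ℂ] V) ⊗[ℂ] (V ⊗[ℂ] V) →ₗ[ℂ] ℂ)
    (hg2 : ∀ a c d e : V,
      g2 ((a ⊗ₜ[ℂ] c) ⊗ₜ[ℂ] (d ⊗ₜ[ℂ] e)) = g (c ⊗ₜ[ℂ] d) * g (a ⊗ₜ[ℂ] e))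
    (P : Module.End ℂ (V ⊗[ℂ] V))
    (hPidem : P * P = P)
    (hsa : ∀ x y : V ⊗[ℂ] V, g2 (P x ⊗ₜ[ℂ] y) = g2 (x ⊗ₜ[ℂ] P y)) :
    Function.Bijective
      (fun L : {L : V →ₗ[ℂ] V ⊗[ℂ] V // ∀ v, L v ∈ LinearMap.range P} =>
        (Phi g P L.1) ∘ₗ (LinearMap.range P).subtype) ↔
    Set.BijOn (fun x => op23 P x)
      (subSV (LinearMap.range P) : Set ((V ⊗[ℂ] V) ⊗[ℂ] V))
      (subVS (LinearMap.range P) : Set ((V ⊗[ℂ] V) ⊗[ℂ] V)) := by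
  classical
  haveI : Module.Finite ℂ V := Module.Finite.of_basis b
  haveI : Module.Free ℂ V := Module.Free.of_basis b
  set S : Submodule ℂ (V ⊗[ℂ] V) := LinearMap.range P with hSdef
  have hPfix : ∀ x : V ⊗[ℂ] V, x ∈ S → P x = x := by
    rintro x ⟨y, rfl⟩
    conv_lhs => rw [← Module.End.mul_apply, hPidem]
  -- the musical map φ : V → V* associated to g, and its bijectivity
  set φ : V →ₗ[ℂ] Module.Dual ℂ V := TensorProduct.curry g with hφdef
  set G : Matrix (Fin n) (Fin n) ℂ := Matrix.of fun i j => g (b i ⊗ₜ[ℂ] b j) with hGdef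
  have hGdet : IsUnit G.det := (Matrix.isUnit_iff_isUnit_det G).mp hG
  have hdetT : IsUnit G.transpose.det := by rwa [Matrix.det_transpose]
  have hφmat : LinearMap.toMatrix b b.dualBasis φ = G.transpose := by
    ext i j
    rw [LinearMap.toMatrix_apply, Module.Basis.dualBasis_repr]
    simp [hφdef, hGdef, Matrix.transpose_apply]
  have hφbij : Function.Bijective φ := by
    have h1 : φ = Matrix.toLin b b.dualBasis G.transpose := by
      rw [← hφmat, Matrix.toLin_toMatrix]
    rw [h1]
    exact (Matrix.toLinOfInv b b.dualBasis (Matrix.mul_nonsing_inv _ hdetT)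
      (Matrix.nonsing_inv_mul _ hdetT)).bijective
  set φe : V ≃ₗ[ℂ] Module.Dual ℂ V := LinearEquiv.ofBijective φ hφbij with hφedef
  -- nondegeneracy of g2
  have hΛcomp : (TensorProduct.curry g2 :
        V ⊗[ℂ] V →ₗ[ℂ] Module.Dual ℂ (V ⊗[ℂ] V)) =
      ((TensorProduct.dualDistribEquivOfBasis b b).toLinearMap ∘ₗ
        (TensorProduct.congr φe φe).toLinearMap ∘ₗ
        (TensorProduct.comm ℂ V V).toLinearMap) := by
    apply TensorProduct.ext'
    intro a c
    apply TensorProduct.ext'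
    intro d e
    simp [hg2, hφedef, hφdef, mul_comm]
  have hΛinj : Function.Injective
      (TensorProduct.curry g2 : V ⊗[ℂ] V →ₗ[ℂ] Module.Dual ℂ (V ⊗[ℂ] V)) := by
    rw [hΛcomp]
    simp only [LinearMap.coe_comp, LinearEquiv.coe_coe]
    exact (TensorProduct.dualDistribEquivOfBasis b b).injective.comp
      ((TensorProduct.congr φe φe).injective.comp (TensorProduct.comm ℂ V V).injective)
  -- the musical map θ : S → S* associated to g2 restricted to S
  set θ : ↥S →ₗ[ℂ] Module.Dual ℂ ↥S :=
    TensorProduct.curry (g2 ∘ₗ TensorProduct.map S.subtype S.subtype) with hθdef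
  have hθapp : ∀ s s' : ↥S, θ s s' = g2 (s.1 ⊗ₜ[ℂ] s'.1) := by
    intro s s'
    simp [hθdef]
  have hθinj : Function.Injective θ := by
    rw [injective_iff_map_eq_zero]
    intro s hs0
    have hzero : (TensorProduct.curry g2 : V ⊗[ℂ] V →ₗ[ℂ] Module.Dual ℂ (V ⊗[ℂ] V)) s.1 = 0 := by
      apply LinearMap.ext
      intro y
      have h1 : g2 (s.1 ⊗ₜ[ℂ] y) = g2 (s.1 ⊗ₜ[ℂ] P y) := by
        conv_lhs => rw [← hPfix s.1 s.2]
        rw [hsa]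
      have h2 : g2 (s.1 ⊗ₜ[ℂ] P y) = θ s ⟨P y, LinearMap.mem_range_self P y⟩ := by
        rw [hθapp]
      simp only [TensorProduct.curry_apply, LinearMap.zero_apply]
      rw [h1, h2, hs0, LinearMap.zero_apply]
    have := hΛinj (by rw [hzero, map_zero] :
      (TensorProduct.curry g2 : V ⊗[ℂ] V →ₗ[ℂ] Module.Dual ℂ (V ⊗[ℂ] V)) s.1 =
      (TensorProduct.curry g2 : V ⊗[ℂ] V →ₗ[ℂ] Module.Dual ℂ (V ⊗[ℂ] V)) 0)
    exact Subtype.ext this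
  have hθsurj : Function.Surjective θ := by
    have hfr : Module.finrank ℂ ↥S = Module.finrank ℂ (Module.Dual ℂ ↥S) :=
      (Subspace.dual_finrank_eq).symm
    exact (LinearMap.injective_iff_surjective_of_finrank_eq_finrank hfr).mp hθinj
  set θe : ↥S ≃ₗ[ℂ] Module.Dual ℂ ↥S := LinearEquiv.ofBijective θ ⟨hθinj, hθsurj⟩ with hθedef
  -- the parametrization A'' of Hom(V,S) by S ⊗ V
  set A'' : (↥S ⊗[ℂ] V) ≃ₗ[ℂ] (V →ₗ[ℂ] ↥S) :=
    (TensorProduct.congr (LinearEquiv.refl ℂ ↥S) φe).trans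
      ((TensorProduct.comm ℂ ↥S (Module.Dual ℂ V)).trans (dualTensorHomEquiv ℂ V ↥S))
    with hA''def
  -- the parametrization B of Hom(S,V) by V ⊗ S
  set B : (V ⊗[ℂ] ↥S) ≃ₗ[ℂ] (↥S →ₗ[ℂ] V) :=
    (TensorProduct.congr (LinearEquiv.refl ℂ V) θe).trans
      ((TensorProduct.comm ℂ V (Module.Dual ℂ ↥S)).trans (dualTensorHomEquiv ℂ ↥S V))
    with hBdef
  -- the corestriction of P to S and the map Q : S ⊗ V → V ⊗ S
  set f' : V ⊗[ℂ] V →ₗ[ℂ] ↥S := LinearMap.codRestrict S P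
    (fun x => LinearMap.mem_range_self P x) with hf'def
  set ι₁ : (↥S ⊗[ℂ] V) →ₗ[ℂ] (V ⊗[ℂ] V) ⊗[ℂ] V :=
    TensorProduct.map S.subtype (LinearMap.id (R := ℂ) (M := V)) with hι₁def
  set ι₂ : (V ⊗[ℂ] ↥S) →ₗ[ℂ] (V ⊗[ℂ] V) ⊗[ℂ] V :=
    (TensorProduct.assoc ℂ V V V).symm.toLinearMap ∘ₗ
      TensorProduct.map (LinearMap.id (R := ℂ) (M := V)) S.subtype with hι₂def
  set Q : (↥S ⊗[ℂ] V) →ₗ[ℂ] (V ⊗[ℂ] ↥S) :=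
    (TensorProduct.map LinearMap.id f') ∘ₗ (TensorProduct.assoc ℂ V V V).toLinearMap ∘ₗ ι₁
    with hQdef
  have hmapP : (TensorProduct.map (LinearMap.id (R := ℂ) (M := V)) S.subtype) ∘ₗ
      (TensorProduct.map (LinearMap.id (R := ℂ) (M := V)) f') =
      TensorProduct.map LinearMap.id P := by
    rw [← TensorProduct.map_comp, LinearMap.subtype_comp_codRestrict, LinearMap.id_comp]
  -- the commuting square for the right-hand side
  have hcomm : ∀ x, op23 P (ι₁ x) = ι₂ (Q x) := by
    intro x
    simp only [op23, hQdef, hι₂def, LinearMap.comp_apply, LinearEquiv.coe_coe]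
    rw [← hmapP]
    simp only [LinearMap.comp_apply]
  -- injectivity of the two inclusions
  obtain ⟨π, hπ⟩ := S.subtype.exists_leftInverse_of_injective S.ker_subtype
  have hι₁inj : Function.Injective ι₁ := by
    apply Function.LeftInverse.injective
      (g := ⇑(TensorProduct.map π (LinearMap.id (R := ℂ) (M := V))))
    intro x
    rw [hι₁def, ← LinearMap.comp_apply, ← TensorProduct.map_comp, hπ, LinearMap.id_comp,
      TensorProduct.map_id, LinearMap.id_apply]
  have hι₂inj : Function.Injective ι₂ := by
    apply Function.LeftInverse.injective
      (g := fun z => (TensorProduct.map (LinearMap.id (R := ℂ) (M := V)) π)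
        ((TensorProduct.assoc ℂ V V V) z))
    intro x
    rw [hι₂def]
    simp only [LinearMap.comp_apply, LinearEquiv.coe_coe, LinearEquiv.apply_symm_apply]
    rw [← LinearMap.comp_apply, ← TensorProduct.map_comp, hπ, LinearMap.id_comp,
      TensorProduct.map_id, LinearMap.id_apply]
  -- the parametrization of the subtype of maps V → S
  set Afun : (↥S ⊗[ℂ] V) → {L : V →ₗ[ℂ] V ⊗[ℂ] V // ∀ v, L v ∈ S} :=
    fun t => ⟨S.subtype ∘ₗ (A'' t), fun v => Submodule.coe_mem (A'' t v)⟩ with hAfundef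
  have hAbij : Function.Bijective Afun := by
    constructor
    · intro t₁ t₂ h
      apply A''.injective
      apply LinearMap.ext
      intro v
      apply Subtype.ext
      exact DFunLike.congr_fun (congrArg Subtype.val h) v
    · rintro ⟨L, hL⟩
      refine ⟨A''.symm (LinearMap.codRestrict S L hL), ?_⟩
      apply Subtype.ext
      show S.subtype ∘ₗ (A'' (A''.symm (LinearMap.codRestrict S L hL))) = L
      rw [LinearEquiv.apply_symm_apply, LinearMap.subtype_comp_codRestrict]
  -- the auxiliary contraction W
  set W : V ⊗[ℂ] V → (V ⊗[ℂ] (V ⊗[ℂ] V)) →ₗ[ℂ] V := fun z =>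
    (TensorProduct.rid ℂ V).toLinearMap ∘ₗ
      TensorProduct.map LinearMap.id ((TensorProduct.curry g2).flip z) with hWdef
  have hWzero : W 0 = 0 := by
    have : ((TensorProduct.curry g2).flip) (0 : V ⊗[ℂ] V) = 0 := map_zero _
    simp [hWdef, this, TensorProduct.map_zero_right]
  have hWadd : ∀ z₁ z₂ : V ⊗[ℂ] V, W (z₁ + z₂) = W z₁ + W z₂ := by
    intro z₁ z₂
    have : ((TensorProduct.curry g2).flip) (z₁ + z₂) =
        ((TensorProduct.curry g2).flip) z₁ + ((TensorProduct.curry g2).flip) z₂ := map_add _ _ _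
    simp [hWdef, this, TensorProduct.map_add_right, LinearMap.comp_add]
  have hWtmul : ∀ (z : V ⊗[ℂ] V) (v : V) (ω : V ⊗[ℂ] V),
      W z (v ⊗ₜ[ℂ] ω) = g2 (ω ⊗ₜ[ℂ] z) • v := by
    intro z v ω
    simp [hWdef]
  -- key computation A : contract against a rank-one-type map
  have keyA : ∀ (u : V) (x z : V ⊗[ℂ] V),
      contract g (TensorProduct.map ((φ u).smulRight x) LinearMap.id z) =
      W z ((TensorProduct.assoc ℂ V V V) (x ⊗ₜ[ℂ] u)) := by
    intro u x z
    induction x using TensorProduct.induction_on with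
    | zero =>
      have h0 : (φ u).smulRight (0 : V ⊗[ℂ] V) = (0 : V →ₗ[ℂ] V ⊗[ℂ] V) := by
        apply LinearMap.ext; intro v; simp
      rw [h0, TensorProduct.map_zero_left, TensorProduct.zero_tmul]
      simp
    | tmul a c =>
      induction z using TensorProduct.induction_on with
      | zero => rw [hWzero]; simp
      | tmul d e =>
        simp only [TensorProduct.map_tmul, LinearMap.smulRight_apply, LinearMap.id_coe, id_eq,
          TensorProduct.assoc_tmul, hWtmul, hg2, hφdef, TensorProduct.curry_apply]
        simp [contract, TensorProduct.smul_tmul, TensorProduct.assoc_tmul,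
          TensorProduct.rid_tmul, smul_smul, mul_comm]
      | add z₁ z₂ ih₁ ih₂ =>
        simp only [map_add, hWadd, LinearMap.add_apply, ih₁, ih₂]
    | add x₁ x₂ ih₁ ih₂ =>
      have hsr : (φ u).smulRight (x₁ + x₂) = (φ u).smulRight x₁ + (φ u).smulRight x₂ := by
        apply LinearMap.ext; intro v; simp [smul_add]
      rw [hsr, TensorProduct.map_add_left]
      simp only [LinearMap.add_apply, map_add, ih₁, ih₂, TensorProduct.add_tmul]
  -- key computation B : moving P through W using self-adjointness
  have keyB : ∀ (w : V ⊗[ℂ] (V ⊗[ℂ] V)) (y : V ⊗[ℂ] V),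
      W y ((TensorProduct.map LinearMap.id P) w) = W (P y) w := by
    intro w y
    induction w using TensorProduct.induction_on with
    | zero => simp
    | tmul v ω =>
      simp only [TensorProduct.map_tmul, LinearMap.id_coe, id_eq, hWtmul]
      rw [hsa]
    | add w₁ w₂ ih₁ ih₂ =>
      simp only [map_add, ih₁, ih₂]
  -- key computation C : evaluating B through W
  have keyC : ∀ (r : V ⊗[ℂ] ↥S) (s' : ↥S),
      (B r) s' = W s'.1 ((TensorProduct.map (LinearMap.id (R := ℂ) (M := V)) S.subtype) r) := by
    intro r s'
    induction r using TensorProduct.induction_on with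
    | zero => simp
    | tmul v σ =>
      simp only [hBdef, LinearEquiv.trans_apply, TensorProduct.congr_tmul,
        LinearEquiv.refl_apply, TensorProduct.comm_tmul, TensorProduct.map_tmul,
        LinearMap.id_coe, id_eq, Submodule.coe_subtype, hWtmul]
      simp only [dualTensorHomEquiv, dualTensorHomEquivOfBasis_apply, dualTensorHom_apply]
      rw [hθedef]
      simp only [LinearEquiv.ofBijective_apply]
      exact congrArg (fun c : ℂ => c • v) (hθapp σ s')
    | add r₁ r₂ ih₁ ih₂ =>
      simp only [map_add, LinearMap.add_apply, ih₁, ih₂]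
  -- the key pointwise identity
  have hkey : ∀ (t : ↥S ⊗[ℂ] V) (s' : ↥S),
      Phi g P ((Afun t).1) s'.1 = (B (Q t)) s' := by
    intro t s'
    induction t using TensorProduct.induction_on with
    | zero =>
      have h0 : (Afun 0).1 = 0 := by
        simp [hAfundef]
      rw [h0]
      simp [Phi, TensorProduct.map_zero_left]
    | tmul s u =>
      have hA : (Afun (s ⊗ₜ[ℂ] u)).1 = (φ u).smulRight s.1 := by
        apply LinearMap.ext
        intro v
        simp only [hAfundef, LinearMap.comp_apply, Submodule.coe_subtype,
          LinearMap.smulRight_apply]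
        rw [hA''def]
        simp only [LinearEquiv.trans_apply, TensorProduct.congr_tmul, LinearEquiv.refl_apply,
          TensorProduct.comm_tmul]
        simp only [dualTensorHomEquiv, dualTensorHomEquivOfBasis_apply, dualTensorHom_apply]
        rw [hφedef]
        simp only [LinearEquiv.ofBijective_apply, Submodule.coe_smul]
        rfl
      have hQs : Q (s ⊗ₜ[ℂ] u) = (TensorProduct.map LinearMap.id f')
          ((TensorProduct.assoc ℂ V V V) (s.1 ⊗ₜ[ℂ] u)) := by
        simp [hQdef, hι₁def]
      rw [hA, hQs, keyC]
      have hstep := DFunLike.congr_fun hmapP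
        ((TensorProduct.assoc ℂ V V V) ((s : V ⊗[ℂ] V) ⊗ₜ[ℂ] u))
      rw [LinearMap.comp_apply] at hstep
      rw [hstep, keyB]
      show contract g ((TensorProduct.map ((φ u).smulRight s.1) LinearMap.id) (P s'.1)) = _
      rw [keyA]
    | add t₁ t₂ ih₁ ih₂ =>
      have hadd : (Afun (t₁ + t₂)).1 = (Afun t₁).1 + (Afun t₂).1 := by
        simp [hAfundef, map_add, LinearMap.comp_add]
      have hPhiadd : ∀ L₁ L₂ : V →ₗ[ℂ] V ⊗[ℂ] V,
          Phi g P (L₁ + L₂) = Phi g P L₁ + Phi g P L₂ := by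
        intro L₁ L₂
        simp only [Phi, TensorProduct.map_add_left, LinearMap.add_comp, LinearMap.comp_add]
      rw [hadd, hPhiadd]
      simp only [map_add, LinearMap.add_apply, ih₁, ih₂]
  -- assembling the left-hand side
  have hcompfun : (fun L : {L : V →ₗ[ℂ] V ⊗[ℂ] V // ∀ v, L v ∈ S} =>
      (Phi g P L.1) ∘ₗ S.subtype) ∘ Afun = ⇑B ∘ ⇑Q := by
    funext t
    apply LinearMap.ext
    intro s'
    show Phi g P ((Afun t).1) (S.subtype s') = (B (Q t)) s'
    exact hkey t s'
  rw [← Function.Bijective.of_comp_iff _ hAbij, hcompfun,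
    Function.Bijective.of_comp_iff' B.bijective]
  -- assembling the right-hand side
  have hsub1 : (subSV S : Set ((V ⊗[ℂ] V) ⊗[ℂ] V)) = Set.range ⇑ι₁ := by
    rw [hι₁def, subSV, LinearMap.coe_range]
  have hsub2 : (subVS S : Set ((V ⊗[ℂ] V) ⊗[ℂ] V)) = Set.range ⇑ι₂ := by
    rw [hι₂def, subVS, LinearMap.coe_range]
  rw [hsub1, hsub2]
  exact (bijOn_range_iff_bijective hι₁inj hι₂inj hcomm).symm
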